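/- Let n ≥ 2, λ ∈ ℝ, a ∈ ℝ[x₁] of degree r with 2 ≤ r < n, and f(x₁,x₂) = x₂ − a(x₁). Define H = (H₁,…,Hₙ) by H₁ = f, Hᵢ = x_{i+1} + ((−1)^i/(i−1)!)·a^{(i−1)}(x₁)·f^{i−1} for 2 ≤ i ≤ r, H_{r+1} = ((−1)^{r+1}/r!)·a^{(r)}(x₁)·f^r, and H_j = f^{j−1} for r+1 < j ≤ n. Then the Jacobian matrix JH is nilpotent at every point of ℝⁿ. -/

import Mathlib

open Polynomial Matrix

private noncomputable def shiftv (n r : ℕ) (v : Fin n → ℝ) : Fin n → ℝ := fun i =>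
  if h : 1 ≤ i.val ∧ i.val ≤ r - 1 ∧ i.val + 1 < n then v ⟨i.val + 1, h.2.2⟩ else 0

private noncomputable def Bv (n r : ℕ) (a : Polynomial ℝ) (x0 f : ℝ) : Fin n → ℝ := fun i =>
  if i.val = 0 then 1
  else if i.val ≤ r then
    ((-1 : ℝ) ^ (i.val + 1) / (Nat.factorial i.val)) *
      ((Polynomial.derivative^[i.val] a).eval x0 * i.val * f ^ (i.val - 1))
  else (i.val : ℝ) * f ^ (i.val - 1)

private noncomputable def Wv (n r : ℕ) (a : Polynomial ℝ) (x0 f : ℝ) : Fin n → ℝ := fun i =>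
  if 1 ≤ i.val ∧ i.val ≤ r - 1 then
    ((-1 : ℝ) ^ (i.val + 1) / (Nat.factorial i.val)) *
      ((Polynomial.derivative^[i.val + 1] a).eval x0 * f ^ i.val)
  else 0

private lemma proj_hasFDerivAt {n : ℕ} (k : Fin n) (p : Fin n → ℝ) :
    HasFDerivAt (fun q : Fin n → ℝ => q k)
      (ContinuousLinearMap.proj k : (Fin n → ℝ) →L[ℝ] ℝ) p :=
  (ContinuousLinearMap.proj k : (Fin n → ℝ) →L[ℝ] ℝ).hasFDerivAt

private lemma key_hasFDerivAt {n : ℕ} (k0 k1 : Fin n) (a A : Polynomial ℝ) (C : ℝ) (m : ℕ)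
    (p : Fin n → ℝ) :
    HasFDerivAt (fun q : Fin n → ℝ => C * A.eval (q k0) * (q k1 - a.eval (q k0)) ^ m)
      ((C * (A.derivative.eval (p k0)) * (p k1 - a.eval (p k0)) ^ m) •
          (ContinuousLinearMap.proj k0 : (Fin n → ℝ) →L[ℝ] ℝ)
        + (C * A.eval (p k0) * m * (p k1 - a.eval (p k0)) ^ (m - 1)) •
          ((ContinuousLinearMap.proj k1 : (Fin n → ℝ) →L[ℝ] ℝ)
            - a.derivative.eval (p k0) •
              (ContinuousLinearMap.proj k0 : (Fin n → ℝ) →L[ℝ] ℝ))) p := by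
  have hA : HasFDerivAt (fun q : Fin n → ℝ => C * A.eval (q k0))
      (C • (A.derivative.eval (p k0) • (ContinuousLinearMap.proj k0 : (Fin n → ℝ) →L[ℝ] ℝ))) p :=
    ((A.hasDerivAt (p k0)).comp_hasFDerivAt (h₂ := fun x => Polynomial.eval x _) p (proj_hasFDerivAt k0 p)).const_mul C
  have hf : HasFDerivAt (fun q : Fin n → ℝ => q k1 - a.eval (q k0))
      ((ContinuousLinearMap.proj k1 : (Fin n → ℝ) →L[ℝ] ℝ)
        - a.derivative.eval (p k0) • (ContinuousLinearMap.proj k0 : (Fin n → ℝ) →L[ℝ] ℝ)) p :=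
    (proj_hasFDerivAt k1 p).sub ((a.hasDerivAt (p k0)).comp_hasFDerivAt (h₂ := fun x => Polynomial.eval x _) p (proj_hasFDerivAt k0 p))
  have hfm := (hasDerivAt_pow m (p k1 - a.eval (p k0))).comp_hasFDerivAt p hf
  have h := hA.mul hfm
  refine h.congr_fderiv ?_
  ext v
  simp only [ContinuousLinearMap.add_apply, ContinuousLinearMap.smul_apply,
    ContinuousLinearMap.sub_apply, ContinuousLinearMap.coe_smul', Pi.smul_apply,
    ContinuousLinearMap.proj_apply, smul_eq_mul, Function.comp_apply, Function.comp]
  ring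

private lemma single_mk {n : ℕ} (j : Fin n) (m : ℕ) (h : m < n) :
    (Pi.single j 1 : Fin n → ℝ) ⟨m, h⟩ = if (j : ℕ) = m then 1 else 0 := by
  rw [Pi.single_apply]
  by_cases hh : (⟨m, h⟩ : Fin n) = j
  · rw [if_pos hh, if_pos]
    exact (congrArg Fin.val hh).symm
  · rw [if_neg hh, if_neg (fun hc => hh (Fin.ext hc.symm))]

private lemma hsum' {n : ℕ} (v : Fin n → ℝ) (m : ℕ) (hm : m < n) (c : ℝ) :
    (∑ j : Fin n, c * (if (j : ℕ) = m then 1 else 0) * v j) = c * v ⟨m, hm⟩ := by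
  rw [Fintype.sum_eq_single (⟨m, hm⟩ : Fin n)]
  · simp
  · intro j hj
    rw [if_neg, mul_zero, zero_mul]
    exact fun hc => hj (Fin.ext hc)

private lemma nilpotent_aux (n r : ℕ) (hr2 : 2 ≤ r) (hrn : r < n)
    (b w : Fin n → ℝ) (α1 : ℝ) (M : Matrix (Fin n) (Fin n) ℝ)
    (hb0 : b ⟨0, by omega⟩ = 1) (hb1 : b ⟨1, by omega⟩ = α1)
    (hw : ∀ i : Fin n, ∀ _ : 1 ≤ i.val ∧ i.val ≤ r - 1, w i = - b ⟨i.val + 1, by omega⟩)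
    (hw0 : ∀ i : Fin n, ¬(1 ≤ i.val ∧ i.val ≤ r - 1) → w i = 0)
    (hmv : ∀ (v : Fin n → ℝ) (i : Fin n), (M *ᵥ v) i =
      (w i - α1 * b i) * v ⟨0, by omega⟩ + b i * v ⟨1, by omega⟩ + shiftv n r v i) :
    M ^ n = 0 := by
  have hshift_pos : ∀ (v : Fin n → ℝ) (i : Fin n) (h : 1 ≤ i.val ∧ i.val ≤ r - 1),
      shiftv n r v i = v ⟨i.val + 1, by omega⟩ := by
    intro v i h
    exact dif_pos ⟨h.1, h.2, by omega⟩
  have hshift_neg : ∀ (v : Fin n → ℝ) (i : Fin n), ¬(1 ≤ i.val ∧ i.val ≤ r - 1) →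
      shiftv n r v i = 0 := by
    intro v i h
    exact dif_neg (fun hh => h ⟨hh.1, hh.2.1⟩)
  -- M *ᵥ b = 0
  have hMb : M *ᵥ b = 0 := by
    funext i
    rw [hmv]
    by_cases hP : 1 ≤ (i : ℕ) ∧ (i : ℕ) ≤ r - 1
    · rw [hshift_pos b i hP, hb0, hb1, hw i hP]; simp; ring
    · rw [hshift_neg b i hP, hb0, hb1, hw0 i hP]; simp; ring
  have hMcb : ∀ c : ℝ, M *ᵥ (c • b) = 0 := by
    intro c; rw [Matrix.mulVec_smul, hMb, smul_zero]
  have hMpowb : ∀ k, 1 ≤ k → M ^ k *ᵥ b = 0 := by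
    intro k hk
    obtain ⟨k', rfl⟩ : ∃ k', k = k' + 1 := ⟨k - 1, by omega⟩
    rw [pow_succ, ← Matrix.mulVec_mulVec, hMb, Matrix.mulVec_zero]
  -- the kill lemma
  have hkill : ∀ k, 1 ≤ k → k ≤ r → ∀ v : Fin n → ℝ,
      (∀ i : Fin n, v i ≠ 0 → 1 ≤ (i : ℕ) ∧ (i : ℕ) ≤ k) → ∃ c : ℝ, M ^ k *ᵥ v = c • b := by
    intro k
    induction k with
    | zero => omega
    | succ k ih =>
      intro _ hkr v hv
      have hvz0 : v (⟨0, by omega⟩ : Fin n) = 0 := by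
        by_contra h
        have h2 : (1:ℕ) ≤ 0 := (hv ⟨0, by omega⟩ h).1
        omega
      have hMv : M *ᵥ v = v (⟨1, by omega⟩ : Fin n) • b + shiftv n r v := by
        funext i
        rw [hmv, hvz0]
        simp [mul_comm]
      rcases Nat.eq_zero_or_pos k with hk0 | hk1
      · subst hk0
        refine ⟨v (⟨1, by omega⟩ : Fin n), ?_⟩
        rw [pow_one, hMv]
        have hzero : shiftv n r v = 0 := by
          funext i
          by_cases hP : 1 ≤ (i : ℕ) ∧ (i : ℕ) ≤ r - 1
          · rw [hshift_pos v i hP]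
            by_contra h
            have h2 : 1 ≤ (i : ℕ) + 1 ∧ (i : ℕ) + 1 ≤ 0 + 1 := hv _ (by simpa using h)
            omega
          · rw [hshift_neg v i hP]; rfl
        rw [hzero, add_zero]
      · have hsupp : ∀ i : Fin n, shiftv n r v i ≠ 0 → 1 ≤ (i : ℕ) ∧ (i : ℕ) ≤ k := by
          intro i hi
          by_cases hP : 1 ≤ (i : ℕ) ∧ (i : ℕ) ≤ r - 1
          · refine ⟨hP.1, ?_⟩
            rw [hshift_pos v i hP] at hi
            have h2 : 1 ≤ (i : ℕ) + 1 ∧ (i : ℕ) + 1 ≤ k + 1 := hv _ hi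
            omega
          · rw [hshift_neg v i hP] at hi; exact absurd rfl hi
        obtain ⟨c, hc⟩ := ih hk1 (by omega) (shiftv n r v) hsupp
        refine ⟨c, ?_⟩
        rw [pow_succ, ← Matrix.mulVec_mulVec, hMv, Matrix.mulVec_add, Matrix.mulVec_smul,
          hMpowb k hk1, smul_zero, zero_add, hc]
  -- columns die at power r+1
  have hcol : ∀ j : Fin n, M ^ (r + 1) *ᵥ (Pi.single j 1 : Fin n → ℝ) = 0 := by
    intro j
    have hδ : ∀ (k : Fin n), (Pi.single j 1 : Fin n → ℝ) k = if (j : ℕ) = (k : ℕ) then 1 else 0 := by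
      intro k
      rw [Pi.single_apply]
      by_cases h : k = j
      · subst h; simp
      · rw [if_neg h, if_neg (fun hh => h (Fin.ext hh.symm))]
    rcases Nat.lt_or_ge 0 (j : ℕ) with hj0 | hj0
    · rcases le_or_gt (j : ℕ) r with hjr | hjr
      · -- 1 ≤ j ≤ r
        have hsupp : ∀ i : Fin n, (Pi.single j 1 : Fin n → ℝ) i ≠ 0 → 1 ≤ (i : ℕ) ∧ (i : ℕ) ≤ r := by
          intro i hi
          rw [hδ] at hi
          by_cases h : (j : ℕ) = (i : ℕ)
          · omega
          · rw [if_neg h] at hi; exact absurd rfl hi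
        obtain ⟨c, hc⟩ := hkill r (by omega) le_rfl (Pi.single j 1 : Fin n → ℝ) hsupp
        rw [pow_succ', ← Matrix.mulVec_mulVec, hc, hMcb]
      · -- j > r : M *ᵥ e_j = 0
        have h1 : M *ᵥ (Pi.single j 1 : Fin n → ℝ) = 0 := by
          funext i
          rw [hmv, hδ ⟨0, by omega⟩, hδ ⟨1, by omega⟩]
          rw [show ((⟨0, by omega⟩ : Fin n) : ℕ) = 0 from rfl,
            show ((⟨1, by omega⟩ : Fin n) : ℕ) = 1 from rfl]
          rw [if_neg (by omega), if_neg (by omega)]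
          by_cases hP : 1 ≤ (i : ℕ) ∧ (i : ℕ) ≤ r - 1
          · rw [hshift_pos _ i hP, hδ, if_neg (by simp; omega)]; simp
          · rw [hshift_neg _ i hP]; simp
        rw [pow_succ, ← Matrix.mulVec_mulVec, h1, Matrix.mulVec_zero]
    · -- j = 0
      have h1 : M *ᵥ (Pi.single j 1 : Fin n → ℝ) = w + (-α1) • b := by
        funext i
        rw [hmv, hδ ⟨0, by omega⟩, hδ ⟨1, by omega⟩]
        rw [show ((⟨0, by omega⟩ : Fin n) : ℕ) = 0 from rfl,
          show ((⟨1, by omega⟩ : Fin n) : ℕ) = 1 from rfl]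
        rw [if_pos (by omega), if_neg (by omega)]
        by_cases hP : 1 ≤ (i : ℕ) ∧ (i : ℕ) ≤ r - 1
        · rw [hshift_pos _ i hP, hδ, if_neg (by simp; omega)]
          simp; ring
        · rw [hshift_neg _ i hP]; simp; ring
      have hsupp : ∀ i : Fin n, w i ≠ 0 → 1 ≤ (i : ℕ) ∧ (i : ℕ) ≤ r - 1 := by
        intro i hi
        by_contra hP
        exact hi (hw0 i hP)
      obtain ⟨c, hc⟩ := hkill (r - 1) (by omega) (by omega) w hsupp
      have hw' : M ^ r *ᵥ w = 0 := by
        rw [show r = 1 + (r - 1) by omega, pow_add, pow_one, ← Matrix.mulVec_mulVec, hc, hMcb]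
      rw [show r + 1 = (1 + (r - 1)) + 1 by omega, pow_succ, ← Matrix.mulVec_mulVec, h1,
        Matrix.mulVec_add, Matrix.mulVec_smul, show 1 + (r - 1) = r by omega, hw',
        hMpowb r (by omega), smul_zero, add_zero]
  -- conclude
  have hM0 : M ^ (r + 1) = 0 := by
    ext i j
    have := congrFun (hcol j) i
    rw [Matrix.mulVec_single] at this
    simpa using this
  have hsplit : M ^ n = M ^ (n - (r + 1)) * M ^ (r + 1) := by
    rw [← pow_add]
    congr 1
    omega
  rw [hsplit, hM0, mul_zero]

/-- van den Essen's map H has nilpotent Jacobian at every point of ℝⁿ. -/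
theorem stmt9 (n : ℕ) (hn : 2 ≤ n) (a : Polynomial ℝ) (r : ℕ)
    (hdeg : a.natDegree = r) (hr2 : 2 ≤ r) (hrn : r < n)
    (H : (Fin n → ℝ) → (Fin n → ℝ))
    (hH : ∀ x : Fin n → ℝ, ∀ i : Fin n,
      H x i =
        if h0 : i.val = 0 then
          x ⟨1, by omega⟩ - a.eval (x ⟨0, by omega⟩)
        else if h1 : i.val ≤ r - 1 then
          x ⟨i.val + 1, by omega⟩
            + ((-1 : ℝ) ^ (i.val + 1) / (Nat.factorial i.val)) *
              ((Polynomial.derivative^[i.val] a).eval (x ⟨0, by omega⟩)) *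
              (x ⟨1, by omega⟩ - a.eval (x ⟨0, by omega⟩)) ^ i.val
        else if h2 : i.val = r then
          ((-1 : ℝ) ^ (r + 1) / (Nat.factorial r)) *
            ((Polynomial.derivative^[r] a).eval (x ⟨0, by omega⟩)) *
            (x ⟨1, by omega⟩ - a.eval (x ⟨0, by omega⟩)) ^ r
        else
          (x ⟨1, by omega⟩ - a.eval (x ⟨0, by omega⟩)) ^ i.val) :
    ∀ p : Fin n → ℝ,
      (Matrix.of fun i j => fderiv ℝ (fun q => H q i) p (Pi.single j 1)) ^ n = 0 := by
  intro p
  -- the entrywise formula for the Jacobian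
  have hentry : ∀ (i j : Fin n), fderiv ℝ (fun q => H q i) p (Pi.single j 1) =
      (Wv n r a (p ⟨0, by omega⟩) (p ⟨1, by omega⟩ - a.eval (p ⟨0, by omega⟩)) i
        - (derivative a).eval (p ⟨0, by omega⟩) *
          Bv n r a (p ⟨0, by omega⟩) (p ⟨1, by omega⟩ - a.eval (p ⟨0, by omega⟩)) i)
        * (if (j : ℕ) = 0 then 1 else 0)
      + Bv n r a (p ⟨0, by omega⟩) (p ⟨1, by omega⟩ - a.eval (p ⟨0, by omega⟩)) i
        * (if (j : ℕ) = 1 then 1 else 0)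
      + (if 1 ≤ (i : ℕ) ∧ (i : ℕ) ≤ r - 1 ∧ (j : ℕ) = (i : ℕ) + 1 then 1 else 0) := by
    intro i j
    by_cases h0 : (i : ℕ) = 0
    · -- row 0
      have hfun : (fun q => H q i)
          = fun q : Fin n → ℝ => q ⟨1, by omega⟩ - a.eval (q ⟨0, by omega⟩) := by
        funext q; rw [hH q i, dif_pos h0]
      have hd : HasFDerivAt (fun q : Fin n → ℝ => q ⟨1, by omega⟩ - a.eval (q ⟨0, by omega⟩))
          ((ContinuousLinearMap.proj ⟨1, by omega⟩ : (Fin n → ℝ) →L[ℝ] ℝ)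
            - (derivative a).eval (p ⟨0, by omega⟩) •
              (ContinuousLinearMap.proj ⟨0, by omega⟩ : (Fin n → ℝ) →L[ℝ] ℝ)) p :=
        (proj_hasFDerivAt (⟨1, by omega⟩ : Fin n) p).sub
          ((a.hasDerivAt (p ⟨0, by omega⟩)).comp_hasFDerivAt (h₂ := fun x => Polynomial.eval x _) p (proj_hasFDerivAt ⟨0, by omega⟩ p))
      rw [hfun, hd.fderiv]
      simp only [ContinuousLinearMap.sub_apply, ContinuousLinearMap.smul_apply,
        ContinuousLinearMap.proj_apply, smul_eq_mul]
      rw [single_mk, single_mk]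
      rw [show Bv n r a (p ⟨0, by omega⟩) (p ⟨1, by omega⟩ - a.eval (p ⟨0, by omega⟩)) i
          = 1 from if_pos h0,
        show Wv n r a (p ⟨0, by omega⟩) (p ⟨1, by omega⟩ - a.eval (p ⟨0, by omega⟩)) i
          = 0 from if_neg (by omega),
        if_neg (show ¬(1 ≤ (i : ℕ) ∧ (i : ℕ) ≤ r - 1 ∧ (j : ℕ) = (i : ℕ) + 1) by omega)]
      ring
    · by_cases h1 : (i : ℕ) ≤ r - 1
      · -- middle rows 1 ≤ i ≤ r-1
        have hi1 : 1 ≤ (i : ℕ) := by omega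
        have hin : (i : ℕ) + 1 < n := by omega
        have hfun : (fun q => H q i) = fun q : Fin n → ℝ => q ⟨(i : ℕ) + 1, by omega⟩
            + ((-1 : ℝ) ^ ((i : ℕ) + 1) / (Nat.factorial (i : ℕ))) *
              ((Polynomial.derivative^[(i : ℕ)] a).eval (q ⟨0, by omega⟩)) *
              (q ⟨1, by omega⟩ - a.eval (q ⟨0, by omega⟩)) ^ (i : ℕ) := by
          funext q; rw [hH q i, dif_neg h0, dif_pos h1]
        have hd : HasFDerivAt (fun q : Fin n → ℝ => q ⟨(i : ℕ) + 1, by omega⟩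
            + ((-1 : ℝ) ^ ((i : ℕ) + 1) / (Nat.factorial (i : ℕ))) *
              ((Polynomial.derivative^[(i : ℕ)] a).eval (q ⟨0, by omega⟩)) *
              (q ⟨1, by omega⟩ - a.eval (q ⟨0, by omega⟩)) ^ (i : ℕ))
            ((ContinuousLinearMap.proj ⟨(i : ℕ) + 1, by omega⟩ : (Fin n → ℝ) →L[ℝ] ℝ)
              + ((((-1 : ℝ) ^ ((i : ℕ) + 1) / (Nat.factorial (i : ℕ))) *
                  ((Polynomial.derivative^[(i : ℕ)] a).derivative.eval (p ⟨0, by omega⟩)) *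
                  (p ⟨1, by omega⟩ - a.eval (p ⟨0, by omega⟩)) ^ (i : ℕ)) •
                  (ContinuousLinearMap.proj ⟨0, by omega⟩ : (Fin n → ℝ) →L[ℝ] ℝ)
                + (((-1 : ℝ) ^ ((i : ℕ) + 1) / (Nat.factorial (i : ℕ))) *
                    ((Polynomial.derivative^[(i : ℕ)] a).eval (p ⟨0, by omega⟩)) * ((i : ℕ) : ℝ) *
                    (p ⟨1, by omega⟩ - a.eval (p ⟨0, by omega⟩)) ^ ((i : ℕ) - 1)) •
                  ((ContinuousLinearMap.proj ⟨1, by omega⟩ : (Fin n → ℝ) →L[ℝ] ℝ)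
                    - (derivative a).eval (p ⟨0, by omega⟩) •
                      (ContinuousLinearMap.proj ⟨0, by omega⟩ : (Fin n → ℝ) →L[ℝ] ℝ)))) p :=
          (proj_hasFDerivAt _ p).add (key_hasFDerivAt _ _ a _ _ _ p)
        rw [hfun, hd.fderiv]
        simp only [ContinuousLinearMap.add_apply, ContinuousLinearMap.sub_apply,
          ContinuousLinearMap.smul_apply, ContinuousLinearMap.proj_apply, smul_eq_mul,
          single_mk]
        rw [show (Polynomial.derivative^[(i : ℕ)] a).derivative
            = Polynomial.derivative^[(i : ℕ) + 1] a
          from (Function.iterate_succ_apply' derivative (i : ℕ) a).symm]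
        rw [show Bv n r a (p ⟨0, by omega⟩) (p ⟨1, by omega⟩ - a.eval (p ⟨0, by omega⟩)) i
            = ((-1 : ℝ) ^ ((i : ℕ) + 1) / (Nat.factorial (i : ℕ))) *
              ((Polynomial.derivative^[(i : ℕ)] a).eval (p ⟨0, by omega⟩) * (i : ℕ) *
                (p ⟨1, by omega⟩ - a.eval (p ⟨0, by omega⟩)) ^ ((i : ℕ) - 1))
          from (if_neg h0).trans (if_pos (by omega))]
        rw [show Wv n r a (p ⟨0, by omega⟩) (p ⟨1, by omega⟩ - a.eval (p ⟨0, by omega⟩)) i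
            = ((-1 : ℝ) ^ ((i : ℕ) + 1) / (Nat.factorial (i : ℕ))) *
              ((Polynomial.derivative^[(i : ℕ) + 1] a).eval (p ⟨0, by omega⟩) * (p ⟨1, by omega⟩ - a.eval (p ⟨0, by omega⟩)) ^ (i : ℕ))
          from if_pos ⟨hi1, h1⟩]
        rw [show (if 1 ≤ (i : ℕ) ∧ (i : ℕ) ≤ r - 1 ∧ (j : ℕ) = (i : ℕ) + 1 then (1:ℝ) else 0)
            = (if (j : ℕ) = (i : ℕ) + 1 then 1 else 0)
          from by by_cases hj : (j : ℕ) = (i : ℕ) + 1 <;> simp [hj, hi1, h1]]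
        ring
      · by_cases h2 : (i : ℕ) = r
        · -- row r
          have hfun : (fun q => H q i) = fun q : Fin n → ℝ =>
              ((-1 : ℝ) ^ (r + 1) / (Nat.factorial r)) *
                ((Polynomial.derivative^[r] a).eval (q ⟨0, by omega⟩)) *
                (q ⟨1, by omega⟩ - a.eval (q ⟨0, by omega⟩)) ^ r := by
            funext q; rw [hH q i, dif_neg h0, dif_neg h1, dif_pos h2]
          have hd := key_hasFDerivAt (⟨0, by omega⟩ : Fin n) (⟨1, by omega⟩ : Fin n) a
            (Polynomial.derivative^[r] a) ((-1 : ℝ) ^ (r + 1) / (Nat.factorial r)) r p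
          rw [hfun, hd.fderiv]
          simp only [ContinuousLinearMap.add_apply, ContinuousLinearMap.sub_apply,
            ContinuousLinearMap.smul_apply, ContinuousLinearMap.proj_apply, smul_eq_mul,
            single_mk]
          rw [show (Polynomial.derivative^[r] a).derivative = 0 from by
            rw [show (Polynomial.derivative^[r] a).derivative
                = Polynomial.derivative^[r + 1] a
              from (Function.iterate_succ_apply' derivative r a).symm]
            exact iterate_derivative_eq_zero (by omega)]
          rw [show Bv n r a (p ⟨0, by omega⟩) (p ⟨1, by omega⟩ - a.eval (p ⟨0, by omega⟩)) i
              = ((-1 : ℝ) ^ ((i : ℕ) + 1) / (Nat.factorial (i : ℕ))) *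
                ((Polynomial.derivative^[(i : ℕ)] a).eval (p ⟨0, by omega⟩) * (i : ℕ) *
                  (p ⟨1, by omega⟩ - a.eval (p ⟨0, by omega⟩)) ^ ((i : ℕ) - 1))
            from (if_neg h0).trans (if_pos (by omega))]
          rw [show Wv n r a (p ⟨0, by omega⟩) (p ⟨1, by omega⟩ - a.eval (p ⟨0, by omega⟩)) i = 0 from if_neg (by omega)]
          rw [show (if 1 ≤ (i : ℕ) ∧ (i : ℕ) ≤ r - 1 ∧ (j : ℕ) = (i : ℕ) + 1 then (1:ℝ) else 0)
              = 0 from if_neg (by omega)]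
          rw [h2]
          simp only [Polynomial.eval_zero]
          ring
        · -- rows i > r
          have hfun : (fun q => H q i) = fun q : Fin n → ℝ =>
              (q ⟨1, by omega⟩ - a.eval (q ⟨0, by omega⟩)) ^ (i : ℕ) := by
            funext q; rw [hH q i, dif_neg h0, dif_neg h1, dif_neg h2]
          have hf : HasFDerivAt (fun q : Fin n → ℝ => q ⟨1, by omega⟩ - a.eval (q ⟨0, by omega⟩))
              ((ContinuousLinearMap.proj ⟨1, by omega⟩ : (Fin n → ℝ) →L[ℝ] ℝ)
                - (derivative a).eval (p ⟨0, by omega⟩) •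
                  (ContinuousLinearMap.proj ⟨0, by omega⟩ : (Fin n → ℝ) →L[ℝ] ℝ)) p :=
            (proj_hasFDerivAt (⟨1, by omega⟩ : Fin n) p).sub
              ((a.hasDerivAt (p ⟨0, by omega⟩)).comp_hasFDerivAt (h₂ := fun x => Polynomial.eval x _) p
                (proj_hasFDerivAt ⟨0, by omega⟩ p))
          have hd : HasFDerivAt (fun q : Fin n → ℝ =>
              (q ⟨1, by omega⟩ - a.eval (q ⟨0, by omega⟩)) ^ (i : ℕ))
              ((((i : ℕ) : ℝ) * (p ⟨1, by omega⟩ - a.eval (p ⟨0, by omega⟩)) ^ ((i : ℕ) - 1)) •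
                ((ContinuousLinearMap.proj ⟨1, by omega⟩ : (Fin n → ℝ) →L[ℝ] ℝ)
                  - (derivative a).eval (p ⟨0, by omega⟩) •
                    (ContinuousLinearMap.proj ⟨0, by omega⟩ : (Fin n → ℝ) →L[ℝ] ℝ))) p :=
            (hasDerivAt_pow (i : ℕ) _).comp_hasFDerivAt p hf
          rw [hfun, hd.fderiv]
          simp only [ContinuousLinearMap.add_apply, ContinuousLinearMap.sub_apply,
            ContinuousLinearMap.smul_apply, ContinuousLinearMap.proj_apply, smul_eq_mul,
            single_mk]
          rw [show Bv n r a (p ⟨0, by omega⟩) (p ⟨1, by omega⟩ - a.eval (p ⟨0, by omega⟩)) i = ((i : ℕ) : ℝ) * (p ⟨1, by omega⟩ - a.eval (p ⟨0, by omega⟩)) ^ ((i : ℕ) - 1)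
            from (if_neg h0).trans (if_neg (by omega))]
          rw [show Wv n r a (p ⟨0, by omega⟩) (p ⟨1, by omega⟩ - a.eval (p ⟨0, by omega⟩)) i = 0 from if_neg (by omega)]
          rw [show (if 1 ≤ (i : ℕ) ∧ (i : ℕ) ≤ r - 1 ∧ (j : ℕ) = (i : ℕ) + 1 then (1:ℝ) else 0)
              = 0 from if_neg (by omega)]
          ring
  -- apply the algebraic lemma
  refine nilpotent_aux n r hr2 hrn
    (Bv n r a (p ⟨0, by omega⟩) (p ⟨1, by omega⟩ - a.eval (p ⟨0, by omega⟩))) (Wv n r a (p ⟨0, by omega⟩) (p ⟨1, by omega⟩ - a.eval (p ⟨0, by omega⟩)))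
    ((derivative a).eval (p ⟨0, by omega⟩)) _ ?_ ?_ ?_ ?_ ?_
  · exact if_pos rfl
  · rw [show Bv n r a (p ⟨0, by omega⟩) (p ⟨1, by omega⟩ - a.eval (p ⟨0, by omega⟩)) ⟨1, by omega⟩
        = ((-1 : ℝ) ^ (1 + 1) / (Nat.factorial 1)) *
          ((Polynomial.derivative^[1] a).eval (p ⟨0, by omega⟩) * (1 : ℕ) * (p ⟨1, by omega⟩ - a.eval (p ⟨0, by omega⟩)) ^ (1 - 1))
      from (if_neg (show ¬((1:ℕ) = 0) by omega)).trans (if_pos (show (1:ℕ) ≤ r by omega))]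
    simp [Function.iterate_one]
  · intro i h
    rw [show Wv n r a (p ⟨0, by omega⟩) (p ⟨1, by omega⟩ - a.eval (p ⟨0, by omega⟩)) i
        = ((-1 : ℝ) ^ ((i : ℕ) + 1) / (Nat.factorial (i : ℕ))) *
          ((Polynomial.derivative^[(i : ℕ) + 1] a).eval (p ⟨0, by omega⟩) * (p ⟨1, by omega⟩ - a.eval (p ⟨0, by omega⟩)) ^ (i : ℕ))
      from if_pos h]
    rw [show Bv n r a (p ⟨0, by omega⟩) (p ⟨1, by omega⟩ - a.eval (p ⟨0, by omega⟩)) ⟨(i : ℕ) + 1, by omega⟩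
        = ((-1 : ℝ) ^ (((i : ℕ) + 1) + 1) / (Nat.factorial ((i : ℕ) + 1))) *
          ((Polynomial.derivative^[(i : ℕ) + 1] a).eval (p ⟨0, by omega⟩) * ((i : ℕ) + 1 : ℕ) *
            (p ⟨1, by omega⟩ - a.eval (p ⟨0, by omega⟩)) ^ (((i : ℕ) + 1) - 1))
      from (if_neg (show ¬((i : ℕ) + 1 = 0) by omega)).trans
        (if_pos (show (i : ℕ) + 1 ≤ r by omega))]
    rw [Nat.add_sub_cancel, pow_succ]
    have hfact : (Nat.factorial ((i : ℕ) + 1) : ℝ)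
        = ((i : ℕ) + 1) * (Nat.factorial (i : ℕ)) := by
      rw [Nat.factorial_succ]; push_cast; ring
    rw [hfact]
    have hne1 : (Nat.factorial (i : ℕ) : ℝ) ≠ 0 := Nat.cast_ne_zero.mpr (Nat.factorial_ne_zero _)
    have hne2 : ((i : ℕ) : ℝ) + 1 ≠ 0 := by positivity
    push_cast
    field_simp
    ring
  · intro i h
    exact if_neg h
  · -- the mulVec formula
    intro v i
    have hcalc : ((Matrix.of fun i j => fderiv ℝ (fun q => H q i) p (Pi.single j 1)) *ᵥ v) i
        = ∑ j : Fin n, fderiv ℝ (fun q => H q i) p (Pi.single j 1) * v j := rfl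
    rw [hcalc]
    have hterm : ∀ j : Fin n, fderiv ℝ (fun q => H q i) p (Pi.single j 1) * v j
        = (Wv n r a (p ⟨0, by omega⟩) (p ⟨1, by omega⟩ - a.eval (p ⟨0, by omega⟩)) i - (derivative a).eval (p ⟨0, by omega⟩) * Bv n r a (p ⟨0, by omega⟩) (p ⟨1, by omega⟩ - a.eval (p ⟨0, by omega⟩)) i) * (if (j : ℕ) = 0 then 1 else 0) * v j
        + Bv n r a (p ⟨0, by omega⟩) (p ⟨1, by omega⟩ - a.eval (p ⟨0, by omega⟩)) i * (if (j : ℕ) = 1 then 1 else 0) * v j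
        + (if 1 ≤ (i : ℕ) ∧ (i : ℕ) ≤ r - 1 ∧ (j : ℕ) = (i : ℕ) + 1 then 1 else 0) * v j := by
      intro j; rw [hentry i j]; ring
    rw [Finset.sum_congr rfl (fun j _ => hterm j), Finset.sum_add_distrib,
      Finset.sum_add_distrib, hsum' v 0 (by omega), hsum' v 1 (by omega)]
    by_cases hP : 1 ≤ (i : ℕ) ∧ (i : ℕ) ≤ r - 1
    · have h3 : ∀ j : Fin n,
          (if 1 ≤ (i : ℕ) ∧ (i : ℕ) ≤ r - 1 ∧ (j : ℕ) = (i : ℕ) + 1 then (1:ℝ) else 0) * v j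
          = 1 * (if (j : ℕ) = (i : ℕ) + 1 then 1 else 0) * v j := by
        intro j; by_cases hj : (j : ℕ) = (i : ℕ) + 1 <;> simp [hj, hP.1, hP.2]
      rw [Finset.sum_congr rfl (fun j _ => h3 j), hsum' v ((i : ℕ) + 1) (by omega)]
      rw [show shiftv n r v i = v ⟨(i : ℕ) + 1, by omega⟩ from dif_pos ⟨hP.1, hP.2, by omega⟩]
      ring
    · have h3 : ∀ j : Fin n,
          (if 1 ≤ (i : ℕ) ∧ (i : ℕ) ≤ r - 1 ∧ (j : ℕ) = (i : ℕ) + 1 then (1:ℝ) else 0) * v j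
          = 0 := by
        intro j; rw [if_neg (fun hc => hP ⟨hc.1, hc.2.1⟩), zero_mul]
      rw [Finset.sum_congr rfl (fun j _ => h3 j), Finset.sum_const_zero,
        show shiftv n r v i = 0 from dif_neg (fun hh => hP ⟨hh.1, hh.2.1⟩)]
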